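/- arXiv:1804.08585 — 2 statements merged into one kernel-verified Lean document; each statement's English description precedes it below -/
import Mathlib

section
/- Let E be an exact category with enough projectives and let P̄ be the full subcategory of projective objects of E. Assume P̄ is closed under binary products in E. Then E is cartesian closed if and only if P̄ has weak simple products. -/
open CategoryTheory Limits

namespace ExComp

universe v u

variable {E : Type u} [Category.{v} E]

/-- A regular epimorphism, as a property of a morphism. -/
def RegEpi {A B : E} (f : A ⟶ B) : Prop := Nonempty (RegularEpi f)

/-- An object is (regular) projective if its covariant hom functor sends regular
epimorphisms to surjections. -/
def RegProjective (X : E) : Prop :=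
  ∀ ⦃A B : E⦄ (e : A ⟶ B), RegEpi e → ∀ f : X ⟶ B, ∃ g : X ⟶ A, g ≫ e = f

/-- `E` has enough projectives: every object admits a regular epimorphism from a
projective object. -/
def EnoughRegProjectives (E : Type u) [Category.{v} E] : Prop :=
  ∀ A : E, ∃ (X : E) (p : X ⟶ A), RegProjective X ∧ RegEpi p

/-- An internal equivalence relation: a jointly monic, reflexive, symmetric and
transitive pair of parallel arrows. -/
structure IsEquivRelPair {R X : E} (r₁ r₂ : R ⟶ X) : Prop where
  jointlyMono : ∀ ⦃T : E⦄ (h k : T ⟶ R), h ≫ r₁ = k ≫ r₁ → h ≫ r₂ = k ≫ r₂ → h = k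
  refl : ∃ d : X ⟶ R, d ≫ r₁ = 𝟙 X ∧ d ≫ r₂ = 𝟙 X
  symm : ∃ s : R ⟶ R, s ≫ r₁ = r₂ ∧ s ≫ r₂ = r₁
  trans : ∀ ⦃T : E⦄ (p q : T ⟶ R), p ≫ r₂ = q ≫ r₁ →
    ∃ t : T ⟶ R, t ≫ r₁ = p ≫ r₁ ∧ t ≫ r₂ = q ≫ r₂

/-- An exact category: a finitely complete category where every morphism factors as a
regular epi followed by a mono, regular epis are stable under pullback, and every
internal equivalence relation is effective (it is the kernel pair of the coequaliser
it admits). -/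
structure IsExact (E : Type u) [Category.{v} E] [HasFiniteLimits E] : Prop where
  factor : ∀ ⦃A B : E⦄ (f : A ⟶ B), ∃ (I : E) (e : A ⟶ I) (m : I ⟶ B),
    RegEpi e ∧ Mono m ∧ e ≫ m = f
  stable : ∀ ⦃A B C : E⦄ (f : A ⟶ B) (g : C ⟶ B), RegEpi f → RegEpi (pullback.snd f g)
  effective : ∀ ⦃R X : E⦄ (r₁ r₂ : R ⟶ X), IsEquivRelPair r₁ r₂ →
    ∃ (Q : E) (q : X ⟶ Q) (w : r₁ ≫ q = r₂ ≫ q),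
      Nonempty (IsColimit (Cofork.ofπ q w)) ∧ IsPullback r₁ r₂ q q

/-- A projective cover of `E`: a (full sub)collection of objects, each projective,
such that every object of `E` admits a regular epimorphism from one of them. -/
def IsProjectiveCover (P : Set E) : Prop :=
  (∀ X ∈ P, RegProjective X) ∧ ∀ A : E, ∃ X ∈ P, ∃ p : X ⟶ A, RegEpi p

section FinLim
variable [HasFiniteLimits E]

/-- `X` is internally projective: every arrow `T ⨯ X ⟶ B` lifts along a regular epi
`A ↠ B` after passing to a regular epi `U ↠ T`. -/
def InternallyProjective (X : E) : Prop :=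
  ∀ ⦃T A B : E⦄ (e : A ⟶ B), RegEpi e → ∀ f : T ⨯ X ⟶ B,
    ∃ (U : E) (u : U ⟶ T) (g : U ⨯ X ⟶ A), RegEpi u ∧ g ≫ e = prod.map u (𝟙 X) ≫ f

/-- Cartesian closure, as a property: for every object `X` the functor `(−) ⨯ X` has a
right adjoint. -/
def CartesianClosedP (E : Type u) [Category.{v} E] [HasFiniteLimits E] : Prop :=
  ∀ X : E, (prod.functor.flip.obj X).IsLeftAdjoint

/-- Local cartesian closure, as a property: every slice is cartesian closed. -/
def LocallyCartesianClosedP (E : Type u) [Category.{v} E] [HasFiniteLimits E] : Prop :=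
  ∀ (I : E) (F : Over I), ((prod.functor (C := Over I)).flip.obj F).IsLeftAdjoint

end FinLim

/-! ## Weak products and weak simple products -/

/-- A weak product in `P` of `X` and `Y`: a span through which every span in `P`
factors (not necessarily uniquely). -/
structure IsWeakProduct (P : Set E) {X Y V : E} (p : V ⟶ X) (q : V ⟶ Y) : Prop where
  mem : V ∈ P
  lift : ∀ ⦃V' : E⦄, V' ∈ P → ∀ (p' : V' ⟶ X) (q' : V' ⟶ Y),
    ∃ h : V' ⟶ V, h ≫ p = p' ∧ h ≫ q = q'

/-- An arrow out of a weak product is determined by projections if it coequalises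
every pair of arrows (from an object of `P`) coequalised by both projections. -/
def DeterminedByProjections (P : Set E) {V X Y Z : E} (p : V ⟶ X) (q : V ⟶ Y)
    (f : V ⟶ Z) : Prop :=
  ∀ ⦃V' : E⦄, V' ∈ P → ∀ (h k : V' ⟶ V), h ≫ p = k ≫ p → h ≫ q = k ≫ q → h ≫ f = k ≫ f

/-- A candidate diagram for a weak simple product of a span `J ←f Y →g X`. -/
structure WSPCone (P : Set E) {J Y X : E} (f : Y ⟶ J) (g : Y ⟶ X)
    (W V : E) (w : W ⟶ J) (p : V ⟶ W) (q : V ⟶ X) (e : V ⟶ Y) : Prop where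
  memW : W ∈ P
  wp : IsWeakProduct P p q
  det : DeterminedByProjections P p q e
  comm₁ : p ≫ w = e ≫ f
  comm₂ : q = e ≫ g

/-- A weak simple product: a weakly terminal candidate diagram. -/
structure IsWeakSimpleProduct (P : Set E) {J Y X : E} (f : Y ⟶ J) (g : Y ⟶ X)
    (W V : E) (w : W ⟶ J) (p : V ⟶ W) (q : V ⟶ X) (e : V ⟶ Y) : Prop where
  cone : WSPCone P f g W V w p q e
  lift : ∀ ⦃W' V' : E⦄ (w' : W' ⟶ J) (p' : V' ⟶ W') (q' : V' ⟶ X) (e' : V' ⟶ Y),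
    WSPCone P f g W' V' w' p' q' e' →
    ∃ (α : W' ⟶ W) (β : V' ⟶ V),
      α ≫ w = w' ∧ β ≫ p = p' ≫ α ∧ β ≫ q = q' ∧ β ≫ e = e'

/-- `P` has weak simple products. -/
def HasWeakSimpleProducts (P : Set E) : Prop :=
  ∀ ⦃J Y X : E⦄, J ∈ P → Y ∈ P → X ∈ P → ∀ (f : Y ⟶ J) (g : Y ⟶ X),
    ∃ (W V : E) (w : W ⟶ J) (p : V ⟶ W) (q : V ⟶ X) (e : V ⟶ Y),
      IsWeakSimpleProduct P f g W V w p q e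

/-! ## Pseudo simple products -/

/-- A candidate diagram for a pseudo simple product (no determinacy requirement). -/
structure PSPCone (P : Set E) {J Y X : E} (f : Y ⟶ J) (g : Y ⟶ X)
    (W V : E) (w : W ⟶ J) (p : V ⟶ W) (q : V ⟶ X) (e : V ⟶ Y) : Prop where
  memW : W ∈ P
  wp : IsWeakProduct P p q
  comm₁ : p ≫ w = e ≫ f
  comm₂ : q = e ≫ g

/-- A pseudo simple product: a weakly terminal candidate diagram. -/
structure IsPseudoSimpleProduct (P : Set E) {J Y X : E} (f : Y ⟶ J) (g : Y ⟶ X)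
    (W V : E) (w : W ⟶ J) (p : V ⟶ W) (q : V ⟶ X) (e : V ⟶ Y) : Prop where
  cone : PSPCone P f g W V w p q e
  lift : ∀ ⦃W' V' : E⦄ (w' : W' ⟶ J) (p' : V' ⟶ W') (q' : V' ⟶ X) (e' : V' ⟶ Y),
    PSPCone P f g W' V' w' p' q' e' →
    ∃ (α : W' ⟶ W) (β : V' ⟶ V),
      α ≫ w = w' ∧ β ≫ p = p' ≫ α ∧ β ≫ q = q' ∧ β ≫ e = e'

/-- `P` has pseudo simple products. -/
def HasPseudoSimpleProducts (P : Set E) : Prop :=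
  ∀ ⦃J Y X : E⦄, J ∈ P → Y ∈ P → X ∈ P → ∀ (f : Y ⟶ J) (g : Y ⟶ X),
    ∃ (W V : E) (w : W ⟶ J) (p : V ⟶ W) (q : V ⟶ X) (e : V ⟶ Y),
      IsPseudoSimpleProduct P f g W V w p q e

/-! ## Weak exponentials -/

/-- A candidate diagram for a weak exponential of `X` and `Y`. -/
structure WExpCone (P : Set E) {X Y : E} (W V : E) (p : V ⟶ W) (q : V ⟶ X)
    (e : V ⟶ Y) : Prop where
  memW : W ∈ P
  wp : IsWeakProduct P p q
  det : DeterminedByProjections P p q e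

/-- A weak exponential of `X` and `Y` in `P`. -/
structure IsWeakExponential (P : Set E) {X Y : E} (W V : E) (p : V ⟶ W) (q : V ⟶ X)
    (e : V ⟶ Y) : Prop where
  cone : WExpCone P W V p q e
  lift : ∀ ⦃W' V' : E⦄ (p' : V' ⟶ W') (q' : V' ⟶ X) (e' : V' ⟶ Y),
    WExpCone P W' V' p' q' e' →
    ∃ (α : W' ⟶ W) (β : V' ⟶ V), β ≫ p = p' ≫ α ∧ β ≫ q = q' ∧ β ≫ e = e'

/-- `P` has weak exponentials. -/
def HasWeakExponentials (P : Set E) : Prop :=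
  ∀ ⦃X Y : E⦄, X ∈ P → Y ∈ P →
    ∃ (W V : E) (p : V ⟶ W) (q : V ⟶ X) (e : V ⟶ Y), IsWeakExponential P W V p q e

/-- A quasi exponential of `X` and `B`: the weak universal property of an exponential
restricted to projective sources. -/
def IsQuasiExponential [HasFiniteLimits E] (P : Set E) (X : E) {B : E} (W : E)
    (e : W ⨯ X ⟶ B) : Prop :=
  ∀ ⦃Z : E⦄, Z ∈ P → ∀ f : Z ⨯ X ⟶ B, ∃ g : Z ⟶ W, prod.map g (𝟙 X) ≫ e = f

section FinLim2
variable [HasFiniteLimits E]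

/-! ## Pseudo equivalence relations, equalities and generalised weak (simple) products -/

/-- A pseudo equivalence relation: a pair of parallel arrows whose image in `E` is an
equivalence relation. -/
def IsPseudoEquivRel {Y1 Y0 : E} (y₁ y₂ : Y1 ⟶ Y0) : Prop :=
  ∃ (R : E) (e : Y1 ⟶ R) (m : R ⟶ Y0 ⨯ Y0), RegEpi e ∧ Mono m ∧
    e ≫ m = prod.lift y₁ y₂ ∧ IsEquivRelPair (m ≫ prod.fst) (m ≫ prod.snd)

/-- An equality for a weak limit, relative to the comparison arrow `c : V0 ⟶ L` into
the actual limit: a pseudo equivalence relation `v₁, v₂ : V1 ⇉ V0` in `P` such that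
`c` is a coequaliser of `v₁, v₂` and `V1` regularly covers the kernel pair of `c`. -/
structure IsEqualityFor (P : Set E) {V1 V0 L : E} (c : V0 ⟶ L) (v₁ v₂ : V1 ⟶ V0) :
    Prop where
  mem : V1 ∈ P
  per : IsPseudoEquivRel v₁ v₂
  w : v₁ ≫ c = v₂ ≫ c
  coeq : Nonempty (IsColimit (Cofork.ofπ c w))
  cover : RegEpi (pullback.lift v₁ v₂ w)

/-- An arrow `e : V ⟶ Z0` out of a weak product with projections `p, q` preserves
projections with respect to a pseudo equivalence relation `z₁, z₂ : Z1 ⇉ Z0` if for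
any equality `v₁, v₂ : V1 ⇉ V` for the weak product there is `t : V1 ⟶ Z1` with
`t ≫ zᵢ = vᵢ ≫ e`. -/
def PreservesProjWP (P : Set E) {V X Y Z1 Z0 : E} (p : V ⟶ X) (q : V ⟶ Y)
    (z₁ z₂ : Z1 ⟶ Z0) (e : V ⟶ Z0) : Prop :=
  ∀ ⦃V1 : E⦄ (v₁ v₂ : V1 ⟶ V), IsEqualityFor P (prod.lift p q) v₁ v₂ →
    ∃ t : V1 ⟶ Z1, t ≫ z₁ = v₁ ≫ e ∧ t ≫ z₂ = v₂ ≫ e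

/-- A candidate diagram for a generalised weak simple product of `f` and `g` with
respect to the pseudo equivalence relation `y₁, y₂`. -/
structure GWSPCone (P : Set E) {Y1 Y0 J X : E} (y₁ y₂ : Y1 ⟶ Y0) (f : Y0 ⟶ J)
    (g : Y0 ⟶ X) (W V : E) (w : W ⟶ J) (p : V ⟶ W) (q : V ⟶ X) (e : V ⟶ Y0) :
    Prop where
  memW : W ∈ P
  wp : IsWeakProduct P p q
  pres : PreservesProjWP P p q y₁ y₂ e
  comm₁ : p ≫ w = e ≫ f
  comm₂ : q = e ≫ g

/-- A generalised weak simple product: a weakly terminal candidate diagram. -/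
structure IsGWSP (P : Set E) {Y1 Y0 J X : E} (y₁ y₂ : Y1 ⟶ Y0) (f : Y0 ⟶ J)
    (g : Y0 ⟶ X) (W V : E) (w : W ⟶ J) (p : V ⟶ W) (q : V ⟶ X) (e : V ⟶ Y0) :
    Prop where
  cone : GWSPCone P y₁ y₂ f g W V w p q e
  lift : ∀ ⦃W' V' : E⦄ (w' : W' ⟶ J) (p' : V' ⟶ W') (q' : V' ⟶ X) (e' : V' ⟶ Y0),
    GWSPCone P y₁ y₂ f g W' V' w' p' q' e' →
    ∃ (α : W' ⟶ W) (β : V' ⟶ V),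
      α ≫ w = w' ∧ β ≫ p = p' ≫ α ∧ β ≫ q = q' ∧ β ≫ e = e'

/-- `P` has generalised weak simple products. -/
def HasGWSP (P : Set E) : Prop :=
  ∀ ⦃Y1 Y0 J X : E⦄, Y1 ∈ P → Y0 ∈ P → J ∈ P → X ∈ P →
    ∀ (y₁ y₂ : Y1 ⟶ Y0), IsPseudoEquivRel y₁ y₂ →
    ∀ (f : Y0 ⟶ J) (g : Y0 ⟶ X), y₁ ≫ f = y₂ ≫ f → y₁ ≫ g = y₂ ≫ g →
    ∃ (W V : E) (w : W ⟶ J) (p : V ⟶ W) (q : V ⟶ X) (e : V ⟶ Y0),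
      IsGWSP P y₁ y₂ f g W V w p q e

/-- A candidate diagram for a generalised weak exponential of `X` and `y₁, y₂`. -/
structure GWExpCone (P : Set E) {X Y1 Y0 : E} (y₁ y₂ : Y1 ⟶ Y0)
    (W V : E) (p : V ⟶ W) (q : V ⟶ X) (e : V ⟶ Y0) : Prop where
  memW : W ∈ P
  wp : IsWeakProduct P p q
  pres : PreservesProjWP P p q y₁ y₂ e

/-- A generalised weak exponential of `X` and a pseudo equivalence relation. -/
structure IsGWExp (P : Set E) {X Y1 Y0 : E} (y₁ y₂ : Y1 ⟶ Y0)
    (W V : E) (p : V ⟶ W) (q : V ⟶ X) (e : V ⟶ Y0) : Prop where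
  cone : GWExpCone P y₁ y₂ W V p q e
  lift : ∀ ⦃W' V' : E⦄ (p' : V' ⟶ W') (q' : V' ⟶ X) (e' : V' ⟶ Y0),
    GWExpCone P y₁ y₂ W' V' p' q' e' →
    ∃ (α : W' ⟶ W) (β : V' ⟶ V), β ≫ p = p' ≫ α ∧ β ≫ q = q' ∧ β ≫ e = e'

/-! ## Weak pullbacks and generalised weak dependent products -/

/-- A weak pullback in `P` of the cospan `X →f J ←w W`. -/
structure IsWeakPullback (P : Set E) {X J W V : E} (f : X ⟶ J) (w : W ⟶ J)
    (a : V ⟶ X) (b : V ⟶ W) : Prop where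
  mem : V ∈ P
  comm : a ≫ f = b ≫ w
  lift : ∀ ⦃V' : E⦄, V' ∈ P → ∀ (a' : V' ⟶ X) (b' : V' ⟶ W), a' ≫ f = b' ≫ w →
    ∃ h : V' ⟶ V, h ≫ a = a' ∧ h ≫ b = b'

/-- Preservation of projections for an arrow out of a weak pullback. -/
def PreservesProjWPB (P : Set E) {V X J W Z1 Z0 : E} (f : X ⟶ J) (w : W ⟶ J)
    (a : V ⟶ X) (b : V ⟶ W) (h : a ≫ f = b ≫ w) (z₁ z₂ : Z1 ⟶ Z0) (e : V ⟶ Z0) :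
    Prop :=
  ∀ ⦃V1 : E⦄ (v₁ v₂ : V1 ⟶ V), IsEqualityFor P (pullback.lift a b h) v₁ v₂ →
    ∃ t : V1 ⟶ Z1, t ≫ z₁ = v₁ ≫ e ∧ t ≫ z₂ = v₂ ≫ e

/-- A candidate diagram for a generalised weak dependent product of `g : Y0 ⟶ X`
along `f : X ⟶ J` with respect to `y₁, y₂`. -/
structure GWDPCone (P : Set E) {Y1 Y0 X J : E} (y₁ y₂ : Y1 ⟶ Y0) (g : Y0 ⟶ X)
    (f : X ⟶ J) (W V : E) (w : W ⟶ J) (a : V ⟶ X) (b : V ⟶ W) (e : V ⟶ Y0) :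
    Prop where
  memW : W ∈ P
  comm : a ≫ f = b ≫ w
  wpb : IsWeakPullback P f w a b
  overX : e ≫ g = a
  pres : PreservesProjWPB P f w a b comm y₁ y₂ e

/-- A generalised weak dependent product: a weakly terminal candidate diagram. -/
structure IsGWDP (P : Set E) {Y1 Y0 X J : E} (y₁ y₂ : Y1 ⟶ Y0) (g : Y0 ⟶ X)
    (f : X ⟶ J) (W V : E) (w : W ⟶ J) (a : V ⟶ X) (b : V ⟶ W) (e : V ⟶ Y0) :
    Prop where
  cone : GWDPCone P y₁ y₂ g f W V w a b e
  lift : ∀ ⦃W' V' : E⦄ (w' : W' ⟶ J) (a' : V' ⟶ X) (b' : V' ⟶ W') (e' : V' ⟶ Y0),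
    GWDPCone P y₁ y₂ g f W' V' w' a' b' e' →
    ∃ (α : W' ⟶ W) (β : V' ⟶ V),
      α ≫ w = w' ∧ β ≫ a = a' ∧ β ≫ b = b' ≫ α ∧ β ≫ e = e'

/-- `P` has generalised weak dependent products (i.e. `P` is weakly locally cartesian
closed). -/
def HasGWDP (P : Set E) : Prop :=
  ∀ ⦃Y1 Y0 X J : E⦄, Y1 ∈ P → Y0 ∈ P → X ∈ P → J ∈ P →
    ∀ (y₁ y₂ : Y1 ⟶ Y0), IsPseudoEquivRel y₁ y₂ →
    ∀ (g : Y0 ⟶ X) (f : X ⟶ J), y₁ ≫ g = y₂ ≫ g →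
    ∃ (W V : E) (w : W ⟶ J) (a : V ⟶ X) (b : V ⟶ W) (e : V ⟶ Y0),
      IsGWDP P y₁ y₂ g f W V w a b e

/-! ## The functor `w_X` on subobjects induced by weak simple products -/

/-- The adjunction property of the weak-simple-product operation `w_X` on subobjects:
for every subobject `a : A ↪ J ⨯ X`, every `P`-cover `Y ↠ A`, every weak simple
product `W → J` of the induced span and every image factorisation `W ↠ I ↪ J` of it,
the subobject `I ↪ J` is a value at `a` of a right adjoint to
`(−) ⨯ X : Sub(J) → Sub(J ⨯ X)`. -/
def WAdj (P : Set E) (J X : E) : Prop :=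
  ∀ ⦃A : E⦄ (a : A ⟶ J ⨯ X), Mono a →
  ∀ ⦃Y : E⦄, Y ∈ P → ∀ (c : Y ⟶ A), RegEpi c →
  ∀ ⦃W V : E⦄ (w : W ⟶ J) (p : V ⟶ W) (q : V ⟶ X) (e : V ⟶ Y),
    IsWeakSimpleProduct P (c ≫ a ≫ prod.fst) (c ≫ a ≫ prod.snd) W V w p q e →
  ∀ ⦃I : E⦄ (ew : W ⟶ I) (m : I ⟶ J), RegEpi ew → Mono m → ew ≫ m = w →
  ∀ ⦃B : E⦄ (b : B ⟶ J), Mono b →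
    ((∃ t : B ⨯ X ⟶ A, t ≫ a = prod.map b (𝟙 X)) ↔ ∃ s : B ⟶ I, s ≫ m = b)

/-! ## Weak dependent products (à la Carboni–Rosolini) -/

/-- `P` has weak dependent products: for `f : X ⟶ J` and `g : Y ⟶ X` in `P` there are
`w : W ⟶ J` in `P` and a surjection `Hom_{P/J}(h, w) → Hom_{P/X}(f*(h), g)` natural
in `h ∈ P/J`. -/
def HasWeakDependentProducts (P : Set E) : Prop :=
  ∀ ⦃X J Y : E⦄, X ∈ P → J ∈ P → Y ∈ P → ∀ (f : X ⟶ J) (g : Y ⟶ X),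
    ∃ (W : E) (_ : W ∈ P) (w : W ⟶ J)
      (ε : ∀ ⦃T : E⦄, T ∈ P → ∀ (h : T ⟶ J) (k : T ⟶ W), k ≫ w = h →
        (pullback h f ⟶ Y)),
      (∀ ⦃T : E⦄ (hT : T ∈ P) (h : T ⟶ J) (k : T ⟶ W) (hk : k ≫ w = h),
         ε hT h k hk ≫ g = pullback.snd h f) ∧
      (∀ ⦃T : E⦄ (hT : T ∈ P) (h : T ⟶ J) (d : pullback h f ⟶ Y),
         d ≫ g = pullback.snd h f → ∃ (k : T ⟶ W) (hk : k ≫ w = h), ε hT h k hk = d) ∧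
      (∀ ⦃T' T : E⦄ (hT' : T' ∈ P) (hT : T ∈ P) (u : T' ⟶ T) (h : T ⟶ J) (k : T ⟶ W)
         (hk : k ≫ w = h),
         ε hT' (u ≫ h) (u ≫ k) (by rw [Category.assoc, hk]) =
           pullback.map (u ≫ h) f h f u (𝟙 X) (𝟙 J) (by simp) (by simp) ≫ ε hT h k hk)

end FinLim2

/-! ### Auxiliary lemmas -/

section Helpers

variable {E : Type u} [Category.{v} E]

attribute [local simp] prod.lift_fst prod.lift_snd prod.lift_fst_assoc prod.lift_snd_assoc pullback.lift_fst pullback.lift_snd pullback.lift_fst_assoc pullback.lift_snd_assoc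

theorem regEpi_epi {A B : E} {f : A ⟶ B} (h : RegEpi f) : Epi f := by
  obtain ⟨h⟩ := h
  exact RegularEpi.epi f h

theorem regEpi_precomp_iso {A' A B : E} (i : A' ⟶ A) [IsIso i] {f : A ⟶ B} (h : RegEpi f) :
    RegEpi (i ≫ f) := by
  obtain ⟨⟨Wc, l, r, w, colim⟩⟩ := h
  have key : ∀ s : Cofork (l ≫ inv i) (r ≫ inv i), ∃ d : B ⟶ s.pt, f ≫ d = inv i ≫ s.π :=
    fun s => ⟨Cofork.IsColimit.desc colim (inv i ≫ s.π) (by simpa using s.condition),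
      by simpa using Cofork.IsColimit.π_desc' colim (inv i ≫ s.π) (by simpa using s.condition)⟩
  refine ⟨⟨Wc, l ≫ inv i, r ≫ inv i, by simp [w], ?_⟩⟩
  refine Cofork.IsColimit.mk _
    (fun s => (key s).choose) (fun s => ?_) (fun s m hm => ?_)
  · have hd := (key s).choose_spec
    simp only [Cofork.π_ofπ, Category.assoc]
    rw [hd]
    simp
  · have hd := (key s).choose_spec
    haveI : Epi f := regEpi_epi ⟨⟨Wc, l, r, w, colim⟩⟩
    refine (cancel_epi (i ≫ f)).mp ?_
    have hm' : (i ≫ f) ≫ m = s.π := by simpa using hm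
    rw [hm', Category.assoc, hd]
    simp

variable [HasFiniteLimits E]

theorem regEpi_of_isPullback (hE : IsExact E) {P' X Y Z : E} {a : P' ⟶ X} {b : P' ⟶ Y}
    {f : X ⟶ Z} {g : Y ⟶ Z} (hP : IsPullback a b f g) (hf : RegEpi f) : RegEpi b := by
  have h2 := hE.stable f g hf
  have hb : b = hP.isoPullback.hom ≫ pullback.snd f g := by
    rw [hP.isoPullback_hom_snd]
  rw [hb]
  exact regEpi_precomp_iso _ h2

theorem regEpi_pullback_fst (hE : IsExact E) {X Y Z : E} (f : X ⟶ Z) {g : Y ⟶ Z}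
    (hg : RegEpi g) : RegEpi (pullback.fst f g) := by
  have h2 := hE.stable g f hg
  have : pullback.fst f g = (pullbackSymmetry f g).hom ≫ pullback.snd g f := by
    simp
  rw [this]
  exact regEpi_precomp_iso _ h2

theorem isPullback_prodMap_left {A' A : E} (e : A' ⟶ A) (X : E) :
    IsPullback (prod.fst : A' ⨯ X ⟶ A') (prod.map e (𝟙 X)) e (prod.fst : A ⨯ X ⟶ A) := by
  refine IsPullback.of_isLimit (PullbackCone.IsLimit.mk ((prod.map_fst e (𝟙 X)).symm)
    (fun s => prod.lift s.fst (s.snd ≫ prod.snd)) (fun s => by simp) (fun s => ?_)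
    (fun s m h1 h2 => ?_)
  )
  · apply Limits.prod.hom_ext
    · simpa using s.condition
    · simp
  · apply Limits.prod.hom_ext
    · simpa using h1
    · have : m ≫ prod.map e (𝟙 X) ≫ prod.snd = s.snd ≫ prod.snd := by rw [← Category.assoc, h2]
      simpa using this

theorem isPullback_prodMap_right {A' A : E} (e : A' ⟶ A) (X : E) :
    IsPullback (prod.snd : X ⨯ A' ⟶ A') (prod.map (𝟙 X) e) e (prod.snd : X ⨯ A ⟶ A) := by
  refine IsPullback.of_isLimit (PullbackCone.IsLimit.mk ((prod.map_snd (𝟙 X) e).symm)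
    (fun s => prod.lift (s.snd ≫ prod.fst) s.fst) (fun s => by simp) (fun s => ?_)
    (fun s m h1 h2 => ?_)
  )
  · apply Limits.prod.hom_ext
    · simp
    · simpa using s.condition
  · apply Limits.prod.hom_ext
    · have : m ≫ prod.map (𝟙 X) e ≫ prod.fst = s.snd ≫ prod.fst := by rw [← Category.assoc, h2]
      simpa using this
    · simpa using h1

theorem regEpi_prodMap_left (hE : IsExact E) {A' A : E} {e : A' ⟶ A} (he : RegEpi e) (X : E) :
    RegEpi (prod.map e (𝟙 X)) :=
  regEpi_of_isPullback hE (isPullback_prodMap_left e X) he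

theorem regEpi_prodMap_right (hE : IsExact E) {A' A : E} {e : A' ⟶ A} (he : RegEpi e) (X : E) :
    RegEpi (prod.map (𝟙 X) e) :=
  regEpi_of_isPullback hE (isPullback_prodMap_right e X) he

theorem regEpi_desc {A B T : E} {f : A ⟶ B} (hf : RegEpi f) (t : A ⟶ T)
    (ht : pullback.fst f f ≫ t = pullback.snd f f ≫ t) : ∃ t' : B ⟶ T, f ≫ t' = t := by
  obtain ⟨hf'⟩ := hf
  haveI := hf'
  have kp : IsKernelPair f (pullback.fst f f) (pullback.snd f f) := IsPullback.of_hasPullback f f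
  have colim := kp.toCoequalizer hf'
  refine ⟨Cofork.IsColimit.desc colim t ht, ?_⟩
  have := Cofork.IsColimit.π_desc' colim t ht
  simpa using this

theorem regEpi_comp (hE : IsExact E) {A B C' : E} {f : A ⟶ B} {g : B ⟶ C'}
    (hf : RegEpi f) (hg : RegEpi g) : RegEpi (f ≫ g) := by
  haveI hfe : Epi f := regEpi_epi hf
  haveI hge : Epi g := regEpi_epi hg
  haveI hhe : Epi (f ≫ g) := epi_comp f g
  have hw : (pullback.fst (f ≫ g) (f ≫ g) ≫ f) ≫ g = (pullback.snd (f ≫ g) (f ≫ g) ≫ f) ≫ g := by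
    simpa [Category.assoc] using pullback.condition (f := f ≫ g) (g := f ≫ g)
  -- the comparison map to the kernel pair of `g`
  let φ : pullback (f ≫ g) (f ≫ g) ⟶ pullback g g :=
    pullback.lift (pullback.fst (f ≫ g) (f ≫ g) ≫ f) (pullback.snd (f ≫ g) (f ≫ g) ≫ f) hw
  have hw₂ : (pullback.fst (f ≫ g) (f ≫ g) ≫ f) ≫ g = pullback.snd (f ≫ g) (f ≫ g) ≫ f ≫ g := by
    simpa [Category.assoc] using hw
  let ψ₁ : pullback (f ≫ g) (f ≫ g) ⟶ pullback g (f ≫ g) :=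
    pullback.lift (pullback.fst (f ≫ g) (f ≫ g) ≫ f) (pullback.snd (f ≫ g) (f ≫ g)) hw₂
  have hw₃ : pullback.fst g (f ≫ g) ≫ g = (pullback.snd g (f ≫ g) ≫ f) ≫ g := by
    simpa [Category.assoc] using pullback.condition (f := g) (g := f ≫ g)
  let ψ₂ : pullback g (f ≫ g) ⟶ pullback g g :=
    pullback.lift (pullback.fst g (f ≫ g)) (pullback.snd g (f ≫ g) ≫ f) hw₃
  have hpb₁ : IsPullback (pullback.fst (f ≫ g) (f ≫ g)) ψ₁ f (pullback.fst g (f ≫ g)) := by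
    refine IsPullback.of_isLimit (PullbackCone.IsLimit.mk (by simp [ψ₁])
      (fun s => pullback.lift s.fst (s.snd ≫ pullback.snd g (f ≫ g)) ?_)
      (fun s => by simp) (fun s => ?_) (fun s m h1 h2 => ?_))
    · rw [Category.assoc, ← pullback.condition]
      rw [← Category.assoc, s.condition, Category.assoc]
    · apply pullback.hom_ext
      · show (pullback.lift s.fst (s.snd ≫ pullback.snd g (f ≫ g)) _ ≫ ψ₁) ≫ pullback.fst g (f ≫ g) = _
        simp only [ψ₁, Category.assoc, pullback.lift_fst, pullback.lift_snd, pullback.lift_fst_assoc, pullback.lift_snd_assoc]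
        exact s.condition
      · show (pullback.lift s.fst (s.snd ≫ pullback.snd g (f ≫ g)) _ ≫ ψ₁) ≫ pullback.snd g (f ≫ g) = _
        simp only [ψ₁, Category.assoc, pullback.lift_fst, pullback.lift_snd, pullback.lift_fst_assoc, pullback.lift_snd_assoc]
    · replace h2 : m ≫ ψ₁ = s.snd := h2
      apply pullback.hom_ext
      · simpa using h1
      · have h3 : m ≫ ψ₁ ≫ pullback.snd g (f ≫ g) = s.snd ≫ pullback.snd g (f ≫ g) := by
          rw [← Category.assoc, h2]
        simpa [ψ₁] using h3
  have hpb₂ : IsPullback (pullback.snd g (f ≫ g)) ψ₂ f (pullback.snd g g) := by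
    refine IsPullback.of_isLimit (PullbackCone.IsLimit.mk (by simp [ψ₂])
      (fun s => pullback.lift (s.snd ≫ pullback.fst g g) s.fst ?_)
      (fun s => by simp) (fun s => ?_) (fun s m h1 h2 => ?_))
    · rw [Category.assoc, pullback.condition (f := g) (g := g), ← Category.assoc,
        ← s.condition, Category.assoc]
    · apply pullback.hom_ext
      · show (pullback.lift (s.snd ≫ pullback.fst g g) s.fst _ ≫ ψ₂) ≫ pullback.fst g g = _
        simp only [ψ₂, Category.assoc, pullback.lift_fst, pullback.lift_snd, pullback.lift_fst_assoc, pullback.lift_snd_assoc]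
      · show (pullback.lift (s.snd ≫ pullback.fst g g) s.fst _ ≫ ψ₂) ≫ pullback.snd g g = _
        simp only [ψ₂, Category.assoc, pullback.lift_fst, pullback.lift_snd, pullback.lift_fst_assoc, pullback.lift_snd_assoc]
        exact s.condition
    · replace h2 : m ≫ ψ₂ = s.snd := h2
      apply pullback.hom_ext
      · have h3 : m ≫ ψ₂ ≫ pullback.fst g g = s.snd ≫ pullback.fst g g := by
          rw [← Category.assoc, h2]
        simpa [ψ₂] using h3
      · simpa using h1
  have hφ : ψ₁ ≫ ψ₂ = φ := by
    apply pullback.hom_ext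
    · simp [ψ₁, ψ₂, φ]
    · simp [ψ₁, ψ₂, φ]
  haveI hφe : Epi φ := by
    rw [← hφ]
    haveI := regEpi_epi (regEpi_of_isPullback hE hpb₁ hf)
    haveI := regEpi_epi (regEpi_of_isPullback hE hpb₂ hf)
    exact epi_comp ψ₁ ψ₂
  have key : ∀ s : Cofork (pullback.fst (f ≫ g) (f ≫ g)) (pullback.snd (f ≫ g) (f ≫ g)),
      ∃ d : C' ⟶ s.pt, (f ≫ g) ≫ d = s.π := by
    intro s
    have hwf : pullback.fst f f ≫ (f ≫ g) = pullback.snd f f ≫ (f ≫ g) := by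
      rw [← Category.assoc, pullback.condition, Category.assoc]
    have hκ : pullback.fst f f ≫ s.π = pullback.snd f f ≫ s.π := by
      have h1 : pullback.lift (pullback.fst f f) (pullback.snd f f) hwf ≫
          pullback.fst (f ≫ g) (f ≫ g) = pullback.fst f f := pullback.lift_fst _ _ _
      have h2 : pullback.lift (pullback.fst f f) (pullback.snd f f) hwf ≫
          pullback.snd (f ≫ g) (f ≫ g) = pullback.snd f f := pullback.lift_snd _ _ _
      calc pullback.fst f f ≫ s.π
          = (pullback.lift (pullback.fst f f) (pullback.snd f f) hwf ≫
              pullback.fst (f ≫ g) (f ≫ g)) ≫ s.π := by rw [h1]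
        _ = (pullback.lift (pullback.fst f f) (pullback.snd f f) hwf ≫
              pullback.snd (f ≫ g) (f ≫ g)) ≫ s.π := by
            rw [Category.assoc, Category.assoc, s.condition]
        _ = pullback.snd f f ≫ s.π := by rw [h2]
    obtain ⟨t', ht'⟩ := regEpi_desc hf s.π hκ
    have hlam : pullback.fst g g ≫ t' = pullback.snd g g ≫ t' := by
      refine (cancel_epi φ).mp ?_
      have e1 : φ ≫ pullback.fst g g = pullback.fst (f ≫ g) (f ≫ g) ≫ f :=
        pullback.lift_fst _ _ _
      have e2 : φ ≫ pullback.snd g g = pullback.snd (f ≫ g) (f ≫ g) ≫ f :=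
        pullback.lift_snd _ _ _
      rw [← Category.assoc, ← Category.assoc, e1, e2, Category.assoc, Category.assoc, ht',
        s.condition]
    obtain ⟨t'', ht''⟩ := regEpi_desc hg t' hlam
    exact ⟨t'', by rw [Category.assoc, ht'', ht']⟩
  have colim : IsColimit (Cofork.ofπ (f ≫ g) (pullback.condition (f := f ≫ g) (g := f ≫ g))) := by
    refine Cofork.IsColimit.mk _ (fun s => (key s).choose) (fun s => ?_) (fun s m hm => ?_)
    · simpa using (key s).choose_spec
    · refine (cancel_epi (f ≫ g)).mp ?_
      rw [(key s).choose_spec]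
      simpa using hm
  exact ⟨⟨_, _, _, pullback.condition, colim⟩⟩

theorem isWeakProduct_prod {A B : E} (h : RegProjective (A ⨯ B)) :
    IsWeakProduct {X : E | RegProjective X} (prod.fst : A ⨯ B ⟶ A) (prod.snd : A ⨯ B ⟶ B) :=
  ⟨h, fun _ _ p' q' => ⟨prod.lift p' q', prod.lift_fst _ _, prod.lift_snd _ _⟩⟩

theorem determined_prod {A B Z : E} (f : A ⨯ B ⟶ Z) :
    DeterminedByProjections {X : E | RegProjective X} (prod.fst : A ⨯ B ⟶ A) prod.snd f :=
  fun _ _ h k h1 h2 => by rw [show h = k from Limits.prod.hom_ext h1 h2]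

theorem forallSub (hE : IsExact E) (hEP : EnoughRegProjectives E)
    (hclosed : ∀ X Y : E, RegProjective X → RegProjective Y → RegProjective (X ⨯ Y))
    (hW : HasWeakSimpleProducts {X : E | RegProjective X})
    {J X : E} (hJ : RegProjective J) (hX : RegProjective X)
    {A : E} (a : A ⟶ J ⨯ X) (ha : Mono a) :
    ∃ (I : E) (mI : I ⟶ J), Mono mI ∧ ∀ (B : E) (b : B ⟶ J),
      ((∃ t : B ⨯ X ⟶ A, t ≫ a = prod.map b (𝟙 X)) ↔ ∃ s : B ⟶ I, s ≫ mI = b) := by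
  obtain ⟨Y, c, hY, hc⟩ := hEP A
  obtain ⟨W, V, w, p, q, e, hS⟩ := hW hJ hY hX (c ≫ a ≫ prod.fst) (c ≫ a ≫ prod.snd)
  obtain ⟨I, ew, mI, hew, hmI, hfac⟩ := hE.factor w
  refine ⟨I, mI, hmI, fun B b => ⟨?_, ?_⟩⟩
  · rintro ⟨t, htt⟩
    obtain ⟨B', β, hB', hβ⟩ := hEP B
    obtain ⟨e', he'⟩ := (hclosed _ _ hB' hX) c hc (prod.map β (𝟙 X) ≫ t)
    have hstep : e' ≫ c ≫ a ≫ prod.fst = prod.fst ≫ β ≫ b := by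
      rw [← Category.assoc e' c, he', Category.assoc, ← Category.assoc t a, htt]
      simp
    have hstep2 : e' ≫ c ≫ a ≫ prod.snd = prod.snd := by
      rw [← Category.assoc e' c, he', Category.assoc, ← Category.assoc t a, htt]
      simp
    have cone : WSPCone {X : E | RegProjective X} (c ≫ a ≫ prod.fst) (c ≫ a ≫ prod.snd)
        B' (B' ⨯ X) (β ≫ b) prod.fst prod.snd e' :=
      { memW := hB'
        wp := isWeakProduct_prod (hclosed _ _ hB' hX)
        det := determined_prod e'
        comm₁ := hstep.symm
        comm₂ := hstep2.symm }
    obtain ⟨α, β', hα, -, -, -⟩ := hS.lift (β ≫ b) prod.fst prod.snd e' cone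
    have hker : pullback.fst β β ≫ α ≫ ew = pullback.snd β β ≫ α ≫ ew := by
      haveI := hmI
      rw [← cancel_mono mI]
      simp only [Category.assoc]
      rw [hfac, hα, ← Category.assoc, pullback.condition, Category.assoc]
    obtain ⟨s, hs⟩ := regEpi_desc hβ (α ≫ ew) hker
    refine ⟨s, ?_⟩
    haveI := regEpi_epi hβ
    rw [← cancel_epi β, ← Category.assoc, hs, Category.assoc, hfac, hα]
  · rintro ⟨s, hs⟩
    obtain ⟨B', β, hB', hβ⟩ := hEP B
    obtain ⟨u, hu⟩ := hB' ew hew (β ≫ s)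
    obtain ⟨σ', hσp, hσq⟩ := hS.cone.wp.lift (hclosed _ _ hB' hX) (prod.fst ≫ u) prod.snd
    have hcomp1 : σ' ≫ e ≫ c ≫ a ≫ prod.fst = prod.fst ≫ β ≫ b := by
      have h1 := hS.cone.comm₁
      rw [← h1, ← Category.assoc, hσp, Category.assoc, ← hfac, ← Category.assoc u,
        hu, Category.assoc, hs]
    have hcomp2 : σ' ≫ e ≫ c ≫ a ≫ prod.snd = prod.snd := by
      have h2 := hS.cone.comm₂
      rw [← h2, hσq]
    have ht'a : σ' ≫ e ≫ c ≫ a = prod.map β (𝟙 X) ≫ prod.map b (𝟙 X) := by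
      apply Limits.prod.hom_ext
      · simpa using hcomp1
      · simpa using hcomp2
    have hker : pullback.fst (prod.map β (𝟙 X)) (prod.map β (𝟙 X)) ≫ σ' ≫ e ≫ c
        = pullback.snd (prod.map β (𝟙 X)) (prod.map β (𝟙 X)) ≫ σ' ≫ e ≫ c := by
      haveI := ha
      rw [← cancel_mono a]
      simp only [Category.assoc]
      rw [ht'a, ← Category.assoc, ← Category.assoc, pullback.condition]
    obtain ⟨t, htd⟩ := regEpi_desc (regEpi_prodMap_left hE hβ X) (σ' ≫ e ≫ c) hker
    refine ⟨t, ?_⟩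
    haveI := regEpi_epi (regEpi_prodMap_left hE hβ X)
    rw [← cancel_epi (prod.map β (𝟙 X)), ← Category.assoc, htd]
    simpa using ht'a

theorem prodMap_id_comp {Z1 Z2 Z3 : E} (X : E) (a : Z1 ⟶ Z2) (b : Z2 ⟶ Z3) :
    prod.map (a ≫ b) (𝟙 X) = prod.map a (𝟙 X) ≫ prod.map b (𝟙 X) := by
  rw [prod.map_map, Category.comp_id]

theorem quasiExp (hE : IsExact E) (hEP : EnoughRegProjectives E)
    (hclosed : ∀ X Y : E, RegProjective X → RegProjective Y → RegProjective (X ⨯ Y))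
    (hW : HasWeakSimpleProducts {X : E | RegProjective X})
    {X : E} (hX : RegProjective X) (B : E) :
    ∃ (W : E) (ε : W ⨯ X ⟶ B), RegProjective W ∧
      ∀ Z : E, RegProjective Z → ∀ h : Z ⨯ X ⟶ B,
        ∃ k : Z ⟶ W, prod.map k (𝟙 X) ≫ ε = h := by
  obtain ⟨Y₀, c, hY₀, hc⟩ := hEP B
  obtain ⟨T, tT, hT, htT⟩ := hEP (⊤_ E)
  have hYP : RegProjective ((Y₀ ⨯ X) ⨯ T) := hclosed _ _ (hclosed _ _ hY₀ hX) hT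
  obtain ⟨W, V, w, p, q, e, hS⟩ := hW hT hYP hX (prod.snd : (Y₀ ⨯ X) ⨯ T ⟶ T)
      (prod.fst ≫ prod.snd : (Y₀ ⨯ X) ⨯ T ⟶ X)
  have hWP : RegProjective W := hS.cone.memW
  obtain ⟨σ, hσp, hσq⟩ := hS.cone.wp.lift (hclosed _ _ hWP hX)
      (prod.fst : W ⨯ X ⟶ W) prod.snd
  refine ⟨W, σ ≫ e ≫ prod.fst ≫ prod.fst ≫ c, hWP, ?_⟩
  intro Z hZ h
  obtain ⟨m, hm⟩ := (hclosed _ _ hZ hX) c hc h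
  obtain ⟨zT, -⟩ := hZ tT htT (terminal.from Z)
  have cone : WSPCone {X : E | RegProjective X} prod.snd (prod.fst ≫ prod.snd)
      Z (Z ⨯ X) zT prod.fst prod.snd
      (prod.lift (prod.lift m prod.snd) (prod.fst ≫ zT)) :=
    { memW := hZ
      wp := isWeakProduct_prod (hclosed _ _ hZ hX)
      det := determined_prod _
      comm₁ := by simp
      comm₂ := by simp }
  obtain ⟨α, β, hα, hβp, hβq, hβe⟩ := hS.lift zT prod.fst prod.snd _ cone
  have hdet : (prod.map α (𝟙 X) ≫ σ) ≫ e = β ≫ e := by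
    refine hS.cone.det (hclosed _ _ hZ hX) _ _ ?_ ?_
    · rw [Category.assoc, hσp, hβp]; simp
    · rw [Category.assoc, hσq, hβq]; simp
  refine ⟨α, ?_⟩
  have hde : prod.map α (𝟙 X) ≫ σ ≫ e = β ≫ e := by rw [← Category.assoc, hdet]
  calc prod.map α (𝟙 X) ≫ σ ≫ e ≫ prod.fst ≫ prod.fst ≫ c
      = (prod.map α (𝟙 X) ≫ σ ≫ e) ≫ prod.fst ≫ prod.fst ≫ c := by
        simp only [Category.assoc]
    _ = (β ≫ e) ≫ prod.fst ≫ prod.fst ≫ c := by rw [hde]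
    _ = (prod.lift (prod.lift m prod.snd) (prod.fst ≫ zT)) ≫ prod.fst ≫ prod.fst ≫ c := by
        rw [Category.assoc, reassoc_of% hβe]
    _ = m ≫ c := by simp
    _ = h := hm

set_option maxHeartbeats 2000000 in
theorem expObj (hE : IsExact E) (hEP : EnoughRegProjectives E)
    (hclosed : ∀ X Y : E, RegProjective X → RegProjective Y → RegProjective (X ⨯ Y))
    (hW : HasWeakSimpleProducts {X : E | RegProjective X})
    {X : E} (hX : RegProjective X) (B : E) :
    ∃ (Q : E) (eq : ∀ A : E, (A ⨯ X ⟶ B) ≃ (A ⟶ Q)),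
      ∀ {A A' : E} (v : A' ⟶ A) (h : A ⨯ X ⟶ B),
        eq A' (prod.map v (𝟙 X) ≫ h) = v ≫ eq A h := by
  obtain ⟨W, ε, hWP, hQ1⟩ := quasiExp hE hEP hclosed hW hX B
  obtain ⟨R, r, hrM, hbic⟩ := forallSub hE hEP hclosed hW (hclosed _ _ hWP hWP) hX
    (equalizer.ι (prod.map (prod.fst : W ⨯ W ⟶ W) (𝟙 X) ≫ ε)
      (prod.map (prod.snd : W ⨯ W ⟶ W) (𝟙 X) ≫ ε)) inferInstance
  have hcond : ∀ {B' : E} (b : B' ⟶ W ⨯ W),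
      (prod.map (b ≫ prod.fst) (𝟙 X) ≫ ε = prod.map (b ≫ prod.snd) (𝟙 X) ≫ ε)
        ↔ ∃ s : B' ⟶ R, s ≫ r = b := by
    intro B' b
    constructor
    · intro hcb
      refine (hbic B' b).mp ⟨equalizer.lift (prod.map b (𝟙 X)) ?_, equalizer.lift_ι _ _⟩
      simpa only [prodMap_id_comp, Category.assoc] using hcb
    · intro hsb
      obtain ⟨t, htt⟩ := (hbic B' b).mpr hsb
      simp only [prodMap_id_comp, Category.assoc]
      rw [← htt]
      simp only [Category.assoc]
      rw [equalizer.condition]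
  have key1 : prod.map (r ≫ prod.fst) (𝟙 X) ≫ ε = prod.map (r ≫ prod.snd) (𝟙 X) ≫ ε :=
    (hcond r).mpr ⟨𝟙 R, Category.id_comp r⟩
  have keyA : ∀ {Z : E} (u : Z ⟶ R),
      prod.map (u ≫ r ≫ prod.fst) (𝟙 X) ≫ ε = prod.map (u ≫ r ≫ prod.snd) (𝟙 X) ≫ ε := by
    intro Z u
    rw [prodMap_id_comp X u (r ≫ prod.fst), prodMap_id_comp X u (r ≫ prod.snd),
      Category.assoc, Category.assoc, key1]
  have key2 : ∀ {Z : E} (k₁ k₂ : Z ⟶ W), prod.map k₁ (𝟙 X) ≫ ε = prod.map k₂ (𝟙 X) ≫ ε →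
      ∃ ρ : Z ⟶ R, ρ ≫ r ≫ prod.fst = k₁ ∧ ρ ≫ r ≫ prod.snd = k₂ := by
    intro Z k₁ k₂ hk
    obtain ⟨Im, eI, mI, heI, hmI, hfI⟩ := hE.factor (prod.lift k₁ k₂)
    haveI := regEpi_epi (regEpi_prodMap_left hE heI X)
    have hIm : prod.map (mI ≫ prod.fst) (𝟙 X) ≫ ε = prod.map (mI ≫ prod.snd) (𝟙 X) ≫ ε := by
      have l1 : prod.map eI (𝟙 X) ≫ prod.map (mI ≫ prod.fst) (𝟙 X) ≫ ε
          = prod.map k₁ (𝟙 X) ≫ ε := by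
        rw [← Category.assoc, ← prodMap_id_comp, ← Category.assoc eI mI, hfI, prod.lift_fst]
      have l2 : prod.map eI (𝟙 X) ≫ prod.map (mI ≫ prod.snd) (𝟙 X) ≫ ε
          = prod.map k₂ (𝟙 X) ≫ ε := by
        rw [← Category.assoc, ← prodMap_id_comp, ← Category.assoc eI mI, hfI, prod.lift_snd]
      rw [← cancel_epi (prod.map eI (𝟙 X)), l1, l2]
      exact hk
    obtain ⟨s, hs⟩ := (hcond mI).mp hIm
    refine ⟨eI ≫ s, ?_, ?_⟩
    · have l : (eI ≫ s) ≫ r ≫ prod.fst = eI ≫ (s ≫ r) ≫ prod.fst := by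
        simp only [Category.assoc]
      rw [l, hs, ← Category.assoc, hfI, prod.lift_fst]
    · have l : (eI ≫ s) ≫ r ≫ prod.snd = eI ≫ (s ≫ r) ≫ prod.snd := by
        simp only [Category.assoc]
      rw [l, hs, ← Category.assoc, hfI, prod.lift_snd]
  have hrel : IsEquivRelPair (r ≫ prod.fst) (r ≫ prod.snd) := by
    constructor
    · intro T h k h1 h2
      haveI := hrM
      rw [← cancel_mono r]
      apply Limits.prod.hom_ext
      · simpa using h1
      · simpa using h2
    · exact key2 (𝟙 W) (𝟙 W) rfl
    · exact key2 (r ≫ prod.snd) (r ≫ prod.fst) key1.symm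
    · intro T pp qq hpq
      refine key2 (pp ≫ r ≫ prod.fst) (qq ≫ r ≫ prod.snd) ?_
      calc prod.map (pp ≫ r ≫ prod.fst) (𝟙 X) ≫ ε
          = prod.map (pp ≫ r ≫ prod.snd) (𝟙 X) ≫ ε := keyA pp
        _ = prod.map (qq ≫ r ≫ prod.fst) (𝟙 X) ≫ ε := by rw [hpq]
        _ = prod.map (qq ≫ r ≫ prod.snd) (𝟙 X) ≫ ε := keyA qq
  obtain ⟨Q, qm, weq, hco, hpb⟩ := hE.effective (r ≫ prod.fst) (r ≫ prod.snd) hrel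
  obtain ⟨colim⟩ := hco
  have hqm : RegEpi qm := ⟨⟨_, _, _, weq, colim⟩⟩
  have weq' : r ≫ prod.fst ≫ qm = r ≫ prod.snd ≫ qm := by
    simpa using weq
  have key3 : ∀ {Z : E} (k₁ k₂ : Z ⟶ W), k₁ ≫ qm = k₂ ≫ qm →
      prod.map k₁ (𝟙 X) ≫ ε = prod.map k₂ (𝟙 X) ≫ ε := by
    intro Z k₁ k₂ hk
    have h1 : hpb.lift k₁ k₂ hk ≫ r ≫ prod.fst = k₁ := hpb.lift_fst k₁ k₂ hk
    have h2 : hpb.lift k₁ k₂ hk ≫ r ≫ prod.snd = k₂ := hpb.lift_snd k₁ k₂ hk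
    have h3 := keyA (hpb.lift k₁ k₂ hk)
    rwa [h1, h2] at h3
  have key2' : ∀ {Z : E} (k₁ k₂ : Z ⟶ W), prod.map k₁ (𝟙 X) ≫ ε = prod.map k₂ (𝟙 X) ≫ ε →
      k₁ ≫ qm = k₂ ≫ qm := by
    intro Z k₁ k₂ hk
    obtain ⟨ρ, h1, h2⟩ := key2 k₁ k₂ hk
    rw [← h1, ← h2]
    simp only [Category.assoc]
    rw [weq']
  -- the matching relation
  let M : ∀ (A : E), (A ⟶ Q) → (A ⨯ X ⟶ B) → Prop := fun A u h =>
    ∃ (Z : E) (ζ : Z ⟶ A) (k : Z ⟶ W), RegProjective Z ∧ RegEpi ζ ∧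
      k ≫ qm = ζ ≫ u ∧ prod.map k (𝟙 X) ≫ ε = prod.map ζ (𝟙 X) ≫ h
  have Mref : ∀ (A : E) (u u' : A ⟶ Q) (h h' : A ⨯ X ⟶ B), M A u h → M A u' h' →
      ∃ (Z : E) (ζ : Z ⟶ A) (k k' : Z ⟶ W), RegEpi ζ ∧
        k ≫ qm = ζ ≫ u ∧ k' ≫ qm = ζ ≫ u' ∧
        prod.map k (𝟙 X) ≫ ε = prod.map ζ (𝟙 X) ≫ h ∧
        prod.map k' (𝟙 X) ≫ ε = prod.map ζ (𝟙 X) ≫ h' := by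
    rintro A u u' h h' ⟨Z, ζ, k, hZ, hζ, h1, h2⟩ ⟨Z', ζ', k', hZ', hζ', h1', h2'⟩
    obtain ⟨Z'', γ, hZ'', hγ⟩ := hEP (pullback ζ ζ')
    refine ⟨Z'', γ ≫ pullback.fst ζ ζ' ≫ ζ, γ ≫ pullback.fst ζ ζ' ≫ k,
      γ ≫ pullback.snd ζ ζ' ≫ k',
      regEpi_comp hE hγ (regEpi_comp hE (regEpi_pullback_fst hE ζ hζ') hζ), ?_, ?_, ?_, ?_⟩
    · simp only [Category.assoc]
      rw [h1]
    · simp only [Category.assoc]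
      rw [h1', ← pullback.condition_assoc]
    · simp only [prodMap_id_comp, Category.assoc]
      rw [h2]
    · simp only [prodMap_id_comp, Category.assoc]
      rw [h2']
      have l : prod.map (pullback.snd ζ ζ') (𝟙 X) ≫ prod.map ζ' (𝟙 X)
          = prod.map (pullback.fst ζ ζ') (𝟙 X) ≫ prod.map ζ (𝟙 X) := by
        rw [← prodMap_id_comp, ← prodMap_id_comp, pullback.condition]
      rw [reassoc_of% l]
  have Mh : ∀ (A : E) (u : A ⟶ Q) (h h' : A ⨯ X ⟶ B), M A u h → M A u h' → h = h' := by
    intro A u h h' hM hM'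
    obtain ⟨Z, ζ, k, k', hζ, h1, h1', h2, h2'⟩ := Mref A u u h h' hM hM'
    have hk : k ≫ qm = k' ≫ qm := by rw [h1, h1']
    have hε := key3 k k' hk
    rw [h2, h2'] at hε
    haveI := regEpi_epi (regEpi_prodMap_left hE hζ X)
    exact (cancel_epi (prod.map ζ (𝟙 X))).mp hε
  have Mu : ∀ (A : E) (u u' : A ⟶ Q) (h : A ⨯ X ⟶ B), M A u h → M A u' h → u = u' := by
    intro A u u' h hM hM'
    obtain ⟨Z, ζ, k, k', hζ, h1, h1', h2, h2'⟩ := Mref A u u' h h hM hM'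
    have hε : prod.map k (𝟙 X) ≫ ε = prod.map k' (𝟙 X) ≫ ε := by rw [h2, h2']
    have hk := key2' k k' hε
    rw [h1, h1'] at hk
    haveI := regEpi_epi hζ
    exact (cancel_epi ζ).mp hk
  have Mtot1 : ∀ (A : E) (u : A ⟶ Q), ∃ h, M A u h := by
    intro A u
    obtain ⟨A', α, hA', hα⟩ := hEP A
    obtain ⟨k, hk⟩ := hA' qm hqm (α ≫ u)
    have hκ : prod.map (pullback.fst α α ≫ k) (𝟙 X) ≫ ε
        = prod.map (pullback.snd α α ≫ k) (𝟙 X) ≫ ε := by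
      apply key3
      simp only [Category.assoc]
      rw [hk, ← pullback.condition_assoc]
    have hfst : (pullback.fst (prod.map α (𝟙 X)) (prod.map α (𝟙 X)) ≫ prod.fst) ≫ α
        = (pullback.snd (prod.map α (𝟙 X)) (prod.map α (𝟙 X)) ≫ prod.fst) ≫ α := by
      have l1 : (pullback.fst (prod.map α (𝟙 X)) (prod.map α (𝟙 X)) ≫ prod.fst) ≫ α
          = pullback.fst (prod.map α (𝟙 X)) (prod.map α (𝟙 X)) ≫ prod.map α (𝟙 X) ≫ prod.fst := by
        simp
      have l2 : (pullback.snd (prod.map α (𝟙 X)) (prod.map α (𝟙 X)) ≫ prod.fst) ≫ α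
          = pullback.snd (prod.map α (𝟙 X)) (prod.map α (𝟙 X)) ≫ prod.map α (𝟙 X) ≫ prod.fst := by
        simp
      rw [l1, l2, ← Category.assoc, ← Category.assoc, pullback.condition]
    have hsnd : pullback.fst (prod.map α (𝟙 X)) (prod.map α (𝟙 X)) ≫ prod.snd
        = pullback.snd (prod.map α (𝟙 X)) (prod.map α (𝟙 X)) ≫ prod.snd := by
      have l1 : pullback.fst (prod.map α (𝟙 X)) (prod.map α (𝟙 X)) ≫ prod.snd
          = pullback.fst (prod.map α (𝟙 X)) (prod.map α (𝟙 X)) ≫ prod.map α (𝟙 X) ≫ prod.snd := by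
        simp
      have l2 : pullback.snd (prod.map α (𝟙 X)) (prod.map α (𝟙 X)) ≫ prod.snd
          = pullback.snd (prod.map α (𝟙 X)) (prod.map α (𝟙 X)) ≫ prod.map α (𝟙 X) ≫ prod.snd := by
        simp
      rw [l1, l2, ← Category.assoc, ← Category.assoc, pullback.condition]
    have hker : pullback.fst (prod.map α (𝟙 X)) (prod.map α (𝟙 X)) ≫ prod.map k (𝟙 X) ≫ ε
        = pullback.snd (prod.map α (𝟙 X)) (prod.map α (𝟙 X)) ≫ prod.map k (𝟙 X) ≫ ε := by
      have hd₁ : pullback.fst (prod.map α (𝟙 X)) (prod.map α (𝟙 X)) ≫ prod.map k (𝟙 X)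
          = prod.lift (pullback.lift _ _ hfst) (pullback.fst (prod.map α (𝟙 X)) (prod.map α (𝟙 X)) ≫ prod.snd) ≫ prod.map (pullback.fst α α ≫ k) (𝟙 X) := by
        apply Limits.prod.hom_ext
        · simp
        · simp
      have hd₂ : pullback.snd (prod.map α (𝟙 X)) (prod.map α (𝟙 X)) ≫ prod.map k (𝟙 X)
          = prod.lift (pullback.lift _ _ hfst) (pullback.fst (prod.map α (𝟙 X)) (prod.map α (𝟙 X)) ≫ prod.snd) ≫ prod.map (pullback.snd α α ≫ k) (𝟙 X) := by
        apply Limits.prod.hom_ext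
        · simp
        · simp [← hsnd]
      rw [← Category.assoc, ← Category.assoc, hd₁, hd₂, Category.assoc, Category.assoc, hκ]
    obtain ⟨h, hh⟩ := regEpi_desc (regEpi_prodMap_left hE hα X) (prod.map k (𝟙 X) ≫ ε) hker
    exact ⟨h, A', α, k, hA', hα, hk, hh.symm⟩
  have Mtot2 : ∀ (A : E) (h : A ⨯ X ⟶ B), ∃ u, M A u h := by
    intro A h
    obtain ⟨A', α, hA', hα⟩ := hEP A
    obtain ⟨k, hk⟩ := hQ1 A' hA' (prod.map α (𝟙 X) ≫ h)
    have hker : pullback.fst α α ≫ k ≫ qm = pullback.snd α α ≫ k ≫ qm := by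
      have l : ∀ (κ : pullback α α ⟶ A'),
          prod.map (κ ≫ k) (𝟙 X) ≫ ε = prod.map (κ ≫ α) (𝟙 X) ≫ h := by
        intro κ
        simp only [prodMap_id_comp, Category.assoc]
        rw [hk]
      have h1 : prod.map (pullback.fst α α ≫ k) (𝟙 X) ≫ ε
          = prod.map (pullback.snd α α ≫ k) (𝟙 X) ≫ ε := by
        rw [l, l, pullback.condition]
      have h2 := key2' _ _ h1
      simpa using h2
    obtain ⟨u, hu⟩ := regEpi_desc hα (k ≫ qm) hker
    exact ⟨u, A', α, k, hA', hα, hu.symm, hk⟩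
  have Mnat : ∀ {A A' : E} (v : A' ⟶ A) (u : A ⟶ Q) (h : A ⨯ X ⟶ B), M A u h →
      M A' (v ≫ u) (prod.map v (𝟙 X) ≫ h) := by
    rintro A A' v u h ⟨Z, ζ, k, hZ, hζ, h1, h2⟩
    obtain ⟨Z₂, γ, hZ₂, hγ⟩ := hEP (pullback v ζ)
    refine ⟨Z₂, γ ≫ pullback.fst v ζ, γ ≫ pullback.snd v ζ ≫ k, hZ₂,
      regEpi_comp hE hγ (regEpi_pullback_fst hE v hζ), ?_, ?_⟩
    · simp only [Category.assoc]
      rw [h1, ← pullback.condition_assoc]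
    · simp only [prodMap_id_comp, Category.assoc]
      rw [h2]
      have l : prod.map (pullback.snd v ζ) (𝟙 X) ≫ prod.map ζ (𝟙 X)
          = prod.map (pullback.fst v ζ) (𝟙 X) ≫ prod.map v (𝟙 X) := by
        rw [← prodMap_id_comp, ← prodMap_id_comp, pullback.condition]
      rw [reassoc_of% l]
  refine ⟨Q, fun A =>
    { toFun := fun h => (Mtot2 A h).choose
      invFun := fun u => (Mtot1 A u).choose
      left_inv := fun h => Mh A (Mtot2 A h).choose _ h
        (Mtot1 A (Mtot2 A h).choose).choose_spec (Mtot2 A h).choose_spec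
      right_inv := fun u => Mu A _ u _
        (Mtot2 A (Mtot1 A u).choose).choose_spec (Mtot1 A u).choose_spec }, ?_⟩
  intro A A' v h
  exact Mu A' _ _ _ (Mtot2 A' (prod.map v (𝟙 X) ≫ h)).choose_spec
    (Mnat v _ h (Mtot2 A h).choose_spec)

theorem prodMap_comp_id {Z1 Z2 Z3 : E} (X : E) (a : Z1 ⟶ Z2) (b : Z2 ⟶ Z3) :
    prod.map (𝟙 X) (a ≫ b) = prod.map (𝟙 X) a ≫ prod.map (𝟙 X) b := by
  rw [prod.map_map, Category.comp_id]

set_option maxHeartbeats 1000000 in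
theorem expObjGen (hE : IsExact E) (hEP : EnoughRegProjectives E)
    (hclosed : ∀ X Y : E, RegProjective X → RegProjective Y → RegProjective (X ⨯ Y))
    (hWS : HasWeakSimpleProducts {X : E | RegProjective X}) (X B : E) :
    ∃ (Q : E) (eq : ∀ A : E, (A ⨯ X ⟶ B) ≃ (A ⟶ Q)),
      ∀ {A A' : E} (v : A' ⟶ A) (h : A ⨯ X ⟶ B),
        eq A' (prod.map v (𝟙 X) ≫ h) = v ≫ eq A h := by
  obtain ⟨X₀, x₀, hX₀, hx₀⟩ := hEP X
  obtain ⟨X₁, γ, hX₁, hγ⟩ := hEP (pullback x₀ x₀)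
  obtain ⟨Q₀, e₀, nat₀⟩ := expObj hE hEP hclosed hWS hX₀ B
  obtain ⟨Q₁, e₁, nat₁⟩ := expObj hE hEP hclosed hWS hX₁ B
  -- the two "restriction" maps
  have hjx : (γ ≫ pullback.fst x₀ x₀) ≫ x₀ = (γ ≫ pullback.snd x₀ x₀) ≫ x₀ := by
    simp only [Category.assoc]
    rw [pullback.condition]
  -- value of the inverse of e₀
  have hsymm₀ : ∀ {A : E} (v : A ⟶ Q₀),
      (e₀ A).symm v = prod.map v (𝟙 X₀) ≫ (e₀ Q₀).symm (𝟙 Q₀) := by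
    intro A v
    rw [Equiv.symm_apply_eq, nat₀, Equiv.apply_symm_apply, Category.comp_id]
  -- the key equivalence for maps into Q₀
  have hkey : ∀ {A : E} (v : A ⟶ Q₀),
      (v ≫ e₁ Q₀ (prod.map (𝟙 Q₀) (γ ≫ pullback.fst x₀ x₀) ≫ (e₀ Q₀).symm (𝟙 Q₀))
        = v ≫ e₁ Q₀ (prod.map (𝟙 Q₀) (γ ≫ pullback.snd x₀ x₀) ≫ (e₀ Q₀).symm (𝟙 Q₀)))
      ↔ (prod.map (𝟙 A) (γ ≫ pullback.fst x₀ x₀) ≫ (e₀ A).symm v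
        = prod.map (𝟙 A) (γ ≫ pullback.snd x₀ x₀) ≫ (e₀ A).symm v) := by
    intro A v
    have swap : ∀ (j : X₁ ⟶ X₀),
        prod.map v (𝟙 X₁) ≫ prod.map (𝟙 Q₀) j ≫ (e₀ Q₀).symm (𝟙 Q₀)
          = prod.map (𝟙 A) j ≫ (e₀ A).symm v := by
      intro j
      rw [hsymm₀ v, ← Category.assoc, ← Category.assoc, prod.map_map, prod.map_map]
      simp
    rw [← nat₁ v, ← nat₁ v, swap, swap]
    exact ⟨fun hh => (e₁ A).injective hh, fun hh => congrArg (e₁ A) hh⟩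
  -- descending along prod.map (𝟙 A) x₀
  have hdesc : ∀ {A : E} (gg : A ⨯ X₀ ⟶ B),
      prod.map (𝟙 A) (γ ≫ pullback.fst x₀ x₀) ≫ gg
        = prod.map (𝟙 A) (γ ≫ pullback.snd x₀ x₀) ≫ gg →
      ∃ hh : A ⨯ X ⟶ B, prod.map (𝟙 A) x₀ ≫ hh = gg := by
    intro A gg hgg
    have hgg' : prod.map (𝟙 A) (pullback.fst x₀ x₀) ≫ gg
        = prod.map (𝟙 A) (pullback.snd x₀ x₀) ≫ gg := by
      haveI := regEpi_epi (regEpi_prodMap_right hE hγ A)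
      rw [← cancel_epi (prod.map (𝟙 A) γ), ← Category.assoc, ← prodMap_comp_id,
        ← Category.assoc, ← prodMap_comp_id]
      exact hgg
    apply regEpi_desc (regEpi_prodMap_right hE hx₀ A)
    -- kernel pair components
    have ha₀ : pullback.fst (prod.map (𝟙 A) x₀) (prod.map (𝟙 A) x₀) ≫ prod.fst
        = pullback.snd (prod.map (𝟙 A) x₀) (prod.map (𝟙 A) x₀) ≫ prod.fst := by
      have l1 : pullback.fst (prod.map (𝟙 A) x₀) (prod.map (𝟙 A) x₀) ≫ prod.fst
          = pullback.fst (prod.map (𝟙 A) x₀) (prod.map (𝟙 A) x₀)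
            ≫ prod.map (𝟙 A) x₀ ≫ prod.fst := by simp
      have l2 : pullback.snd (prod.map (𝟙 A) x₀) (prod.map (𝟙 A) x₀) ≫ prod.fst
          = pullback.snd (prod.map (𝟙 A) x₀) (prod.map (𝟙 A) x₀)
            ≫ prod.map (𝟙 A) x₀ ≫ prod.fst := by simp
      rw [l1, l2, ← Category.assoc, ← Category.assoc, pullback.condition]
    have hc : (pullback.fst (prod.map (𝟙 A) x₀) (prod.map (𝟙 A) x₀) ≫ prod.snd) ≫ x₀
        = (pullback.snd (prod.map (𝟙 A) x₀) (prod.map (𝟙 A) x₀) ≫ prod.snd) ≫ x₀ := by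
      have l1 : (pullback.fst (prod.map (𝟙 A) x₀) (prod.map (𝟙 A) x₀) ≫ prod.snd) ≫ x₀
          = pullback.fst (prod.map (𝟙 A) x₀) (prod.map (𝟙 A) x₀)
            ≫ prod.map (𝟙 A) x₀ ≫ prod.snd := by simp
      have l2 : (pullback.snd (prod.map (𝟙 A) x₀) (prod.map (𝟙 A) x₀) ≫ prod.snd) ≫ x₀
          = pullback.snd (prod.map (𝟙 A) x₀) (prod.map (𝟙 A) x₀)
            ≫ prod.map (𝟙 A) x₀ ≫ prod.snd := by simp
      rw [l1, l2, ← Category.assoc, ← Category.assoc, pullback.condition]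
    have hd₁ : pullback.fst (prod.map (𝟙 A) x₀) (prod.map (𝟙 A) x₀)
        = prod.lift (pullback.fst (prod.map (𝟙 A) x₀) (prod.map (𝟙 A) x₀) ≫ prod.fst)
            (pullback.lift _ _ hc) ≫ prod.map (𝟙 A) (pullback.fst x₀ x₀) := by
      apply Limits.prod.hom_ext
      · simp
      · simp
    have hd₂ : pullback.snd (prod.map (𝟙 A) x₀) (prod.map (𝟙 A) x₀)
        = prod.lift (pullback.fst (prod.map (𝟙 A) x₀) (prod.map (𝟙 A) x₀) ≫ prod.fst)
            (pullback.lift _ _ hc) ≫ prod.map (𝟙 A) (pullback.snd x₀ x₀) := by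
      apply Limits.prod.hom_ext
      · simp [← ha₀]
      · simp
    calc pullback.fst (prod.map (𝟙 A) x₀) (prod.map (𝟙 A) x₀) ≫ gg
        = (prod.lift (pullback.fst (prod.map (𝟙 A) x₀) (prod.map (𝟙 A) x₀) ≫ prod.fst)
            (pullback.lift _ _ hc) ≫ prod.map (𝟙 A) (pullback.fst x₀ x₀)) ≫ gg := by
          rw [← hd₁]
      _ = prod.lift (pullback.fst (prod.map (𝟙 A) x₀) (prod.map (𝟙 A) x₀) ≫ prod.fst)
            (pullback.lift _ _ hc) ≫ prod.map (𝟙 A) (pullback.fst x₀ x₀) ≫ gg := by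
          rw [Category.assoc]
      _ = prod.lift (pullback.fst (prod.map (𝟙 A) x₀) (prod.map (𝟙 A) x₀) ≫ prod.fst)
            (pullback.lift _ _ hc) ≫ prod.map (𝟙 A) (pullback.snd x₀ x₀) ≫ gg := by
          rw [hgg']
      _ = pullback.snd (prod.map (𝟙 A) x₀) (prod.map (𝟙 A) x₀) ≫ gg := by
          rw [← Category.assoc, ← hd₂]
  -- the exponential
  set δ₁ := e₁ Q₀ (prod.map (𝟙 Q₀) (γ ≫ pullback.fst x₀ x₀) ≫ (e₀ Q₀).symm (𝟙 Q₀)) with hδ₁def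
  set δ₂ := e₁ Q₀ (prod.map (𝟙 Q₀) (γ ≫ pullback.snd x₀ x₀) ≫ (e₀ Q₀).symm (𝟙 Q₀)) with hδ₂def
  have hEq : ∀ (A : E) (h : A ⨯ X ⟶ B),
      e₀ A (prod.map (𝟙 A) x₀ ≫ h) ≫ δ₁ = e₀ A (prod.map (𝟙 A) x₀ ≫ h) ≫ δ₂ := by
    intro A h
    rw [hkey, Equiv.symm_apply_apply, ← Category.assoc, ← prodMap_comp_id,
      ← Category.assoc, ← prodMap_comp_id, hjx]
  have hInv : ∀ (A : E) (s : A ⟶ equalizer δ₁ δ₂),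
      ∃ hh : A ⨯ X ⟶ B, prod.map (𝟙 A) x₀ ≫ hh = (e₀ A).symm (s ≫ equalizer.ι δ₁ δ₂) := by
    intro A s
    apply hdesc
    rw [← hkey]
    simp only [Category.assoc]
    rw [equalizer.condition]
  refine ⟨equalizer δ₁ δ₂, fun A =>
    { toFun := fun h => equalizer.lift (e₀ A (prod.map (𝟙 A) x₀ ≫ h)) (hEq A h)
      invFun := fun s => (hInv A s).choose
      left_inv := fun h => by
        have hspec := (hInv A (equalizer.lift (e₀ A (prod.map (𝟙 A) x₀ ≫ h))
          (hEq A h))).choose_spec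
        haveI := regEpi_epi (regEpi_prodMap_right hE hx₀ A)
        refine (cancel_epi (prod.map (𝟙 A) x₀)).mp ?_
        rw [hspec, equalizer.lift_ι, Equiv.symm_apply_apply]
      right_inv := fun s => by
        have hspec := (hInv A s).choose_spec
        apply equalizer.hom_ext
        rw [equalizer.lift_ι, hspec, Equiv.apply_symm_apply] }, ?_⟩
  intro A A' v h
  simp only [Equiv.coe_fn_mk]
  apply equalizer.hom_ext
  rw [equalizer.lift_ι, Category.assoc, equalizer.lift_ι, ← nat₀]
  congr 1
  rw [← Category.assoc, ← Category.assoc, prod.map_map, prod.map_map]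
  simp

end Helpers

attribute [local simp] prod.lift_fst prod.lift_snd prod.lift_fst_assoc prod.lift_snd_assoc pullback.lift_fst pullback.lift_snd pullback.lift_fst_assoc pullback.lift_snd_assoc

/-- If the projectives of `E` are closed under binary products, then `E`
is cartesian closed iff the full subcategory of projectives has weak simple
products. -/
theorem stmt6 {E : Type u} [Category.{v} E] [HasFiniteLimits E]
    (hE : IsExact E) (hEP : EnoughRegProjectives E)
    (hclosed : ∀ X Y : E, RegProjective X → RegProjective Y → RegProjective (X ⨯ Y)) :
    CartesianClosedP E ↔ HasWeakSimpleProducts {X : E | RegProjective X} := by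
  constructor
  · intro hcc J Y X hJ hY hX f g
    haveI := hcc X
    have adj := Adjunction.ofIsLeftAdjoint (prod.functor.flip.obj X)
    set G := (prod.functor.flip.obj X).rightAdjoint with hG
    let lam : ∀ (A B₂ : E), (A ⨯ X ⟶ B₂) → (A ⟶ G.obj B₂) := fun A B₂ m => adj.homEquiv A B₂ m
    have lamInj : ∀ {A B₂ : E} (m m' : A ⨯ X ⟶ B₂), lam A B₂ m = lam A B₂ m' → m = m' :=
      fun m m' hh => (adj.homEquiv _ _).injective hh
    have lamL : ∀ {A A' B₂ : E} (v : A' ⟶ A) (m : A ⨯ X ⟶ B₂),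
        lam A' B₂ (prod.map v (𝟙 X) ≫ m) = v ≫ lam A B₂ m :=
      fun v m => adj.homEquiv_naturality_left v m
    have lamR : ∀ {A B₂ B₃ : E} (m : A ⨯ X ⟶ B₂) (k : B₂ ⟶ B₃),
        lam A B₃ (m ≫ k) = lam A B₂ m ≫ G.map k :=
      fun m k => adj.homEquiv_naturality_right m k
    have lamSnd : ∀ (A : E), lam A X prod.snd = terminal.from A ≫ lam (⊤_ E) X prod.snd := by
      intro A
      have h1 : (prod.snd : A ⨯ X ⟶ X) = prod.map (terminal.from A) (𝟙 X) ≫ prod.snd := by simp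
      rw [h1, lamL]
    set W₀ := pullback
      (equalizer.ι (G.map g) (terminal.from (G.obj Y) ≫ lam (⊤_ E) X prod.snd) ≫ G.map f)
      (lam J J prod.fst) with hW₀def
    set w₀ : W₀ ⟶ J := pullback.snd _ _ with hw₀def
    set u₀ : W₀ ⟶ G.obj Y := pullback.fst _ _ ≫ equalizer.ι _ _ with hu₀def
    set ev₀ : W₀ ⨯ X ⟶ Y := (adj.homEquiv W₀ Y).symm u₀ with hev₀def
    have lamev : lam W₀ Y ev₀ = u₀ := Equiv.apply_symm_apply _ _
    have hg₀ : ev₀ ≫ g = prod.snd := by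
      apply lamInj
      rw [lamR, lamev, lamSnd, hu₀def, Category.assoc, equalizer.condition,
        ← Category.assoc, ← Category.assoc]
      congr 1
      exact Subsingleton.elim _ _
    have hf₀ : ev₀ ≫ f = prod.fst ≫ w₀ := by
      apply lamInj
      rw [lamR, lamev]
      have l1 : u₀ ≫ G.map f = w₀ ≫ lam J J prod.fst := by
        rw [hu₀def, Category.assoc]
        exact pullback.condition
      have l2 : (prod.fst : W₀ ⨯ X ⟶ W₀) ≫ w₀ = prod.map w₀ (𝟙 X) ≫ prod.fst := by simp
      rw [l1, l2, lamL]
    obtain ⟨W, ρ, hWp, hρ⟩ := hEP W₀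
    refine ⟨W, W ⨯ X, ρ ≫ w₀, prod.fst, prod.snd, prod.map ρ (𝟙 X) ≫ ev₀,
      ⟨hWp, isWeakProduct_prod (hclosed _ _ hWp hX), determined_prod _, ?_, ?_⟩, ?_⟩
    · rw [Category.assoc, hf₀]
      simp
    · rw [Category.assoc, hg₀]
      simp
    · intro W' V' w' p' q' e' hcone
      obtain ⟨hws, hw1, hw2⟩ := hcone.wp.lift (hclosed _ _ hcone.memW hX)
        (prod.fst : W' ⨯ X ⟶ W') prod.snd
      have hm1 : (hws ≫ e') ≫ g = prod.snd := by
        rw [Category.assoc, ← hcone.comm₂, hw2]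
      have hm2 : (hws ≫ e') ≫ f = prod.fst ≫ w' := by
        rw [Category.assoc, ← hcone.comm₁, reassoc_of% hw1]
      have hξc : lam W' Y (hws ≫ e') ≫ G.map g
          = lam W' Y (hws ≫ e') ≫ (terminal.from (G.obj Y) ≫ lam (⊤_ E) X prod.snd) := by
        rw [← lamR, hm1, lamSnd, ← Category.assoc]
        congr 1
        exact Subsingleton.elim _ _
      have hξf : equalizer.lift (lam W' Y (hws ≫ e')) hξc
          ≫ (equalizer.ι (G.map g) (terminal.from (G.obj Y) ≫ lam (⊤_ E) X prod.snd) ≫ G.map f)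
          = w' ≫ lam J J prod.fst := by
        rw [← Category.assoc, equalizer.lift_ι, ← lamR, hm2]
        have l2 : (prod.fst : W' ⨯ X ⟶ W') ≫ w' = prod.map w' (𝟙 X) ≫ prod.fst := by simp
        rw [l2, lamL]
      have hφw : pullback.lift _ _ hξf ≫ w₀ = w' := pullback.lift_snd _ _ _
      have hφev : prod.map (pullback.lift _ _ hξf) (𝟙 X) ≫ ev₀ = hws ≫ e' := by
        apply lamInj
        rw [lamL, lamev, hu₀def, ← Category.assoc, pullback.lift_fst, equalizer.lift_ι]
      obtain ⟨α, hαρ⟩ := hcone.memW ρ hρ (pullback.lift _ _ hξf)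
      refine ⟨α, prod.lift (p' ≫ α) q', ?_, ?_, ?_, ?_⟩
      · rw [← Category.assoc, hαρ, hφw]
      · simp
      · simp
      · have h1 : prod.lift (p' ≫ α) q' ≫ prod.map ρ (𝟙 X)
            = prod.lift p' q' ≫ prod.map (pullback.lift _ _ hξf) (𝟙 X) := by
          apply Limits.prod.hom_ext
          · simp only [Category.assoc, prod.map_fst, prod.lift_fst_assoc, prod.lift_fst]
            rw [hαρ]
          · simp
            exact (prod.lift_snd _ _).symm
        rw [← Category.assoc, h1, Category.assoc, hφev]
        have h3 : (prod.lift p' q' ≫ hws) ≫ e' = (𝟙 V') ≫ e' := by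
          refine hcone.det hcone.wp.mem _ _ ?_ ?_
          · rw [Category.assoc, hw1, Category.id_comp]
            simp
          · rw [Category.assoc, hw2, Category.id_comp]
            simp
        rw [← Category.assoc, h3, Category.id_comp]
  · intro hWS X
    have hgen : ∀ B : E, ∃ (Q : E) (eq : ∀ A : E, (A ⨯ X ⟶ B) ≃ (A ⟶ Q)),
        ∀ {A A' : E} (v : A' ⟶ A) (h : A ⨯ X ⟶ B),
          eq A' (prod.map v (𝟙 X) ≫ h) = v ≫ eq A h :=
      fun B => expObjGen hE hEP hclosed hWS X B
    exact (Adjunction.adjunctionOfEquivRight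
      (F := prod.functor.flip.obj X) (G_obj := fun B => (hgen B).choose)
      (fun A B => (hgen B).choose_spec.choose A)
      (fun A' A B v g => (hgen B).choose_spec.choose_spec v g)).isLeftAdjoint

end ExComp
end

section
/- Let E be an exact category with enough projectives and P a projective cover of E. If E is cartesian closed, then P has pseudo simple products: every span J ← Y → X in P admits a pseudo simple product. -/
open CategoryTheory Limits

namespace ExComp

universe v u

variable {E : Type u} [Category.{v} E]

/-- If `E` is cartesian closed, then any projective cover `P` has pseudo
simple products. -/
theorem stmt8 {E : Type u} [Category.{v} E] [HasFiniteLimits E]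
    (hE : IsExact E) (P : Set E) (hP : IsProjectiveCover P)
    (hcc : CartesianClosedP E) :
    HasPseudoSimpleProducts P := by
  intro J Y X hJ hY hX f g
  obtain ⟨A, ρ, a, hρ, hma, hfac⟩ := hE.factor (prod.lift f g)
  haveI := hma
  have hρf : ρ ≫ (a ≫ prod.fst) = f := by
    rw [← Category.assoc, hfac, prod.lift_fst]
  have hρg : ρ ≫ (a ≫ prod.snd) = g := by
    rw [← Category.assoc, hfac, prod.lift_snd]
  haveI := hcc X
  let adj := Adjunction.ofIsLeftAdjoint (prod.functor.flip.obj X)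
  let R := (prod.functor.flip.obj X).rightAdjoint
  let u : J ⟶ R.obj (J ⨯ X) := adj.homEquiv J (J ⨯ X) (𝟙 (J ⨯ X))
  obtain ⟨W, hW, cW, hcW⟩ := hP.2 (pullback u (R.map a))
  let w₀ : pullback u (R.map a) ⟶ J := pullback.fst u (R.map a)
  let w : W ⟶ J := cW ≫ w₀
  let evA : (pullback u (R.map a)) ⨯ X ⟶ A :=
    (adj.homEquiv _ A).symm (pullback.snd u (R.map a))
  have hevA : evA ≫ a = prod.map w₀ (𝟙 X) := by
    have h1 : (adj.homEquiv _ (J ⨯ X)).symm (pullback.snd u (R.map a) ≫ R.map a)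
        = evA ≫ a := adj.homEquiv_naturality_right_symm _ _
    rw [← h1, ← pullback.condition]
    have h2 : (adj.homEquiv _ (J ⨯ X)).symm (w₀ ≫ u) =
        (prod.functor.flip.obj X).map w₀ ≫ (adj.homEquiv J (J ⨯ X)).symm u :=
      adj.homEquiv_naturality_left_symm _ _
    rw [h2]
    show _ ≫ (adj.homEquiv J (J ⨯ X)).symm ((adj.homEquiv J (J ⨯ X)) (𝟙 (J ⨯ X))) = _
    erw [Equiv.symm_apply_apply, Category.comp_id]
    rfl
  obtain ⟨V, hV, cV, hcV⟩ := hP.2 (pullback w f)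
  let p : V ⟶ W := cV ≫ pullback.fst w f
  let e : V ⟶ Y := cV ≫ pullback.snd w f
  refine ⟨W, V, w, p, e ≫ g, e, ⟨⟨hW, ⟨hV, ?_⟩, ?_, rfl⟩, ?_⟩⟩
  · -- weak product lifting property
    intro V' hV' p' q'
    have hyAa : (prod.lift (p' ≫ cW) q' ≫ evA) ≫ a = prod.lift (p' ≫ w) q' := by
      rw [Category.assoc, hevA, prod.lift_map, Category.comp_id, Category.assoc]
    obtain ⟨y, hy⟩ := hP.1 V' hV' ρ hρ (prod.lift (p' ≫ cW) q' ≫ evA)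
    have hyf : y ≫ f = p' ≫ w := by
      rw [← hρf, ← Category.assoc, hy, ← Category.assoc, hyAa, prod.lift_fst]
    have hyg : y ≫ g = q' := by
      rw [← hρg, ← Category.assoc, hy, ← Category.assoc, hyAa, prod.lift_snd]
    obtain ⟨h, hh⟩ := hP.1 V' hV' cV hcV (pullback.lift p' y hyf.symm)
    refine ⟨h, ?_, ?_⟩
    · show h ≫ cV ≫ pullback.fst w f = p'
      rw [← Category.assoc, hh, pullback.lift_fst]
    · show h ≫ (cV ≫ pullback.snd w f) ≫ g = q'
      rw [← Category.assoc, ← Category.assoc, hh, pullback.lift_snd, hyg]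
  · -- comm₁
    show (cV ≫ pullback.fst w f) ≫ w = (cV ≫ pullback.snd w f) ≫ f
    rw [Category.assoc, Category.assoc, pullback.condition]
  · -- weak terminality
    intro W' V' w' p' q' e' hc
    obtain ⟨V'', hV'', cc, hcc2⟩ := hP.2 (W' ⨯ X)
    haveI := hcc2.some.effectiveEpi
    haveI : @EffectiveEpi E _ ((prod.functor.flip.obj X).obj W') V'' cc := hcc2.some.effectiveEpi
    obtain ⟨h, hh1, hh2⟩ := hc.wp.lift hV'' (cc ≫ prod.fst) (cc ≫ prod.snd)
    have hm : (h ≫ e' ≫ ρ) ≫ a = cc ≫ prod.map w' (𝟙 X) := by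
      apply Limits.prod.hom_ext
      · rw [Category.assoc, Category.assoc, Category.assoc, hρf, ← hc.comm₁,
          ← Category.assoc, hh1, Category.assoc, Category.assoc, prod.map_fst]
      · rw [Category.assoc, Category.assoc, Category.assoc, hρg, ← hc.comm₂,
          hh2, Category.assoc, prod.map_snd, Category.comp_id]
    have hdet : ∀ {Z : E} (g₁ g₂ : Z ⟶ V''), g₁ ≫ cc = g₂ ≫ cc →
        g₁ ≫ (h ≫ e' ≫ ρ) = g₂ ≫ (h ≫ e' ≫ ρ) := by
      intro Z g₁ g₂ hg
      have key : h ≫ e' ≫ ρ ≫ a = cc ≫ prod.map w' (𝟙 X) := by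
        rw [← hm]; simp only [Category.assoc]
      rw [← cancel_mono a]
      simp only [Category.assoc]
      rw [key, ← Category.assoc, hg, Category.assoc]
    have hmb : cc ≫ EffectiveEpi.desc cc (h ≫ e' ≫ ρ) hdet = h ≫ e' ≫ ρ :=
      EffectiveEpi.fac cc _ hdet
    have hmba : EffectiveEpi.desc cc (h ≫ e' ≫ ρ) hdet ≫ a = prod.map w' (𝟙 X) := by
      rw [← cancel_epi cc, ← Category.assoc, hmb, hm]
    have hτ : adj.homEquiv W' A (EffectiveEpi.desc cc (h ≫ e' ≫ ρ) hdet) ≫ R.map a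
        = w' ≫ u := by
      have h1 : adj.homEquiv W' A (EffectiveEpi.desc cc (h ≫ e' ≫ ρ) hdet) ≫ R.map a
          = adj.homEquiv W' (J ⨯ X) (EffectiveEpi.desc cc (h ≫ e' ≫ ρ) hdet ≫ a) :=
        (adj.homEquiv_naturality_right _ _).symm
      erw [h1, hmba,
        show prod.map w' (𝟙 X) = (prod.functor.flip.obj X).map w' from rfl,
        ← Category.comp_id ((prod.functor.flip.obj X).map w'),
        adj.homEquiv_naturality_left]
      rfl
    obtain ⟨α, hα⟩ := hP.1 W' hc.memW cW hcW
      (pullback.lift w' (adj.homEquiv W' A (EffectiveEpi.desc cc (h ≫ e' ≫ ρ) hdet)) hτ.symm)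
    have hαw : α ≫ w = w' := by
      show α ≫ cW ≫ w₀ = w'
      rw [← Category.assoc, hα, pullback.lift_fst]
    have hcond : (p' ≫ α) ≫ w = e' ≫ f := by
      rw [Category.assoc, hαw, hc.comm₁]
    obtain ⟨β, hβ⟩ := hP.1 V' hc.wp.mem cV hcV (pullback.lift (p' ≫ α) e' hcond)
    refine ⟨α, β, hαw, ?_, ?_, ?_⟩
    · show β ≫ cV ≫ pullback.fst w f = p' ≫ α
      rw [← Category.assoc, hβ, pullback.lift_fst]
    · show β ≫ (cV ≫ pullback.snd w f) ≫ g = q'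
      rw [← Category.assoc, ← Category.assoc, hβ, pullback.lift_snd, ← hc.comm₂]
    · show β ≫ cV ≫ pullback.snd w f = e'
      rw [← Category.assoc, hβ, pullback.lift_snd]

end ExComp
end
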